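/- arXiv:math/0103114 — 6 statements merged into one kernel-verified Lean document; each statement's English description precedes it below -/
import Mathlib

section
/- For any group G and any element g ∈ G, the commutator subgroup [⟨g⟩, ⟨g⟩^G] equals the iterated commutator subgroup [[G, ⟨g⟩], ⟨g⟩]. -/
open Subgroup
open scoped Pointwise
open scoped commutatorElement

/-- `⁅⊤, A⁆` is normal in `G` for any subgroup `A`. -/
lemma aux_top_commutator_normal {G : Type*} [Group G] (A : Subgroup G) :
    (⁅(⊤ : Subgroup G), A⁆).Normal := by
  constructor
  intro n hn
  rw [Subgroup.commutator_def] at hn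
  refine closure_induction (fun m hm y => ?_) (fun y => by simpa using one_mem _)
    (fun m m' _ _ hm hm' y => by
      have : y * (m * m') * y⁻¹ = (y * m * y⁻¹) * (y * m' * y⁻¹) := by group
      rw [this]; exact mul_mem (hm y) (hm' y))
    (fun m _ hm y => by
      have : y * m⁻¹ * y⁻¹ = (y * m * y⁻¹)⁻¹ := by group
      rw [this]; exact inv_mem (hm y)) hn
  obtain ⟨x, -, a, ha, rfl⟩ := hm
  have key : y * ⁅x, a⁆ * y⁻¹ = ⁅y * x, a⁆ * ⁅y, a⁆⁻¹ := by
    simp only [commutatorElement_def]; group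
  rw [key]
  exact mul_mem (commutator_mem_commutator (mem_top _) ha)
    (inv_mem (commutator_mem_commutator (mem_top _) ha))

/-- `[⟨g⟩, ⟨g⟩^G] = [[G, ⟨g⟩], ⟨g⟩]`. -/
theorem stmt2 {G : Type*} [Group G] (g : G) :
    ⁅Subgroup.zpowers g, Subgroup.normalClosure ((Subgroup.zpowers g : Subgroup G) : Set G)⁆ =
      ⁅⁅(⊤ : Subgroup G), Subgroup.zpowers g⁆, Subgroup.zpowers g⁆ := by
  set A : Subgroup G := Subgroup.zpowers g with hA
  set C : Subgroup G := ⁅(⊤ : Subgroup G), A⁆ with hC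
  haveI hCn : C.Normal := aux_top_commutator_normal A
  -- A ⊔ C is normal
  haveI hACn : (A ⊔ C).Normal := by
    constructor
    intro n hn y
    have hmem : n ∈ ((A : Set G) * (C : Set G)) := by
      rw [← Subgroup.mul_normal A C]; exact hn
    obtain ⟨a, ha, c, hc, rfl⟩ := hmem
    have h1 : y * (a * c) * y⁻¹ = (y * a * y⁻¹) * (y * c * y⁻¹) := by group
    rw [h1]
    refine mul_mem ?_ ((le_sup_right : C ≤ A ⊔ C) (hCn.conj_mem c hc y))
    have h2 : y * a * y⁻¹ = ⁅y, a⁆ * a := by simp only [commutatorElement_def]; group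
    rw [h2]
    exact mul_mem ((le_sup_right : C ≤ A ⊔ C) (commutator_mem_commutator (mem_top _) ha)) ((le_sup_left : A ≤ A ⊔ C) ha)
  have hNle : Subgroup.normalClosure (A : Set G) ≤ A ⊔ C :=
    Subgroup.normalClosure_le_normal (fun x hx => le_sup_left (α := Subgroup G) hx)
  have hCN : C ≤ Subgroup.normalClosure (A : Set G) := by
    rw [hC, commutator_le]
    intro x _ a ha
    have haN : a ∈ Subgroup.normalClosure (A : Set G) := Subgroup.subset_normalClosure ha
    have : ⁅x, a⁆ = (x * a * x⁻¹) * a⁻¹ := by group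
    rw [this]
    exact mul_mem (Subgroup.normalClosure_normal.conj_mem a haN x) (inv_mem haN)
  apply le_antisymm
  · rw [commutator_le]
    intro a ha n hn
    have hn' : n ∈ ((C : Set G) * (A : Set G)) := by
      rw [← Subgroup.normal_mul C A, sup_comm]; exact hNle hn
    obtain ⟨c, hc, b, hb, rfl⟩ := hn'
    obtain ⟨i, rfl⟩ := ha
    obtain ⟨j, rfl⟩ := hb
    have hcomm : g ^ j * (g ^ i)⁻¹ * (g ^ j)⁻¹ = (g ^ i)⁻¹ := by
      have : Commute ((g ^ i)⁻¹) (g ^ j) := ((Commute.refl g).zpow_zpow i j).inv_left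
      rw [← this.eq, mul_assoc, mul_inv_cancel, mul_one]
    have key : ⁅g ^ i, c * g ^ j⁆ = ⁅g ^ i, c⁆ := by
      have expand : ⁅g ^ i, c * g ^ j⁆
          = g ^ i * c * (g ^ j * (g ^ i)⁻¹ * (g ^ j)⁻¹) * c⁻¹ := by
        simp only [commutatorElement_def]; group
      rw [expand, hcomm]
      rfl
    rw [key, commutator_comm]
    exact commutator_mem_commutator (mem_zpowers_iff.mpr ⟨i, rfl⟩) hc
  · rw [commutator_comm]
    exact Subgroup.commutator_mono le_rfl hCN
end

section
/- Let G be a group and g ∈ G. Define subgroups A_n by A_1 = ⟨g⟩^G (the normal closure of ⟨g⟩ in G) and A_{n+1} = ⟨g⟩^{A_n} (the normal closure of ⟨g⟩ in A_n), and define D_n by D_1 = [G, ⟨g⟩] and D_{n+1} = [D_n, ⟨g⟩]. Then for every n ≥ 1, [⟨g⟩, A_n] = D_{n+1}. -/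
open Subgroup
open scoped commutatorElement

/-- The normal closure of a subgroup `H` in a subgroup `K` (as a subgroup of `G`):
the subgroup generated by all conjugates `k⁻¹*h*k`, `h ∈ H`, `k ∈ K`. -/
def nclIn {G : Type*} [Group G] (H K : Subgroup G) : Subgroup G :=
  Subgroup.closure {x | ∃ h ∈ H, ∃ k ∈ K, x = k⁻¹ * h * k}

/-- `H` normalizes `⁅K, H⁆`. -/
lemma normalized_right {G : Type*} [Group G] (K H : Subgroup G) {h : G} (hh : h ∈ H) {y : G}
    (hy : y ∈ ⁅K, H⁆) : h * y * h⁻¹ ∈ ⁅K, H⁆ := by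
  rw [Subgroup.commutator_def] at hy
  induction hy using Subgroup.closure_induction with
  | mem x hx =>
            obtain ⟨a, ha, b, hb, rfl⟩ := hx
            have : h * ⁅a, b⁆ * h⁻¹ = ⁅a, h⁆⁻¹ * ⁅a, h * b⁆ := by
              simp only [commutatorElement_def]; group
            rw [this]
            exact mul_mem (inv_mem (commutator_mem_commutator ha hh))
              (commutator_mem_commutator ha (mul_mem hh hb))
  | one => simpa using one_mem _
  | mul x y hx hy ihx ihy =>
            have : h * (x * y) * h⁻¹ = (h * x * h⁻¹) * (h * y * h⁻¹) := by group
            rw [this]; exact mul_mem ihx ihy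
  | inv x hx ih =>
            have : h * x⁻¹ * h⁻¹ = (h * x * h⁻¹)⁻¹ := by group
            rw [this]; exact inv_mem ih

lemma nclIn_eq {G : Type*} [Group G] (H K : Subgroup G) :
    nclIn H K = H ⊔ ⁅H, K⁆ := by
  apply le_antisymm
  · rw [nclIn, Subgroup.closure_le]
    rintro x ⟨h, hh, k, hk, rfl⟩
    have : k⁻¹ * h * k = h * ⁅h⁻¹, k⁻¹⁆ := by
      simp only [commutatorElement_def]; group
    rw [SetLike.mem_coe, this]
    exact mul_mem (Subgroup.mem_sup_left hh)
      (Subgroup.mem_sup_right (commutator_mem_commutator (inv_mem hh) (inv_mem hk)))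
  · apply sup_le
    · intro h hh
      apply Subgroup.subset_closure
      exact ⟨h, hh, 1, one_mem K, by group⟩
    · rw [Subgroup.commutator_le]
      intro h hh k hk
      have : ⁅h, k⁆ = (1⁻¹ * h * 1) * ((k⁻¹)⁻¹ * h⁻¹ * k⁻¹) := by
        simp only [commutatorElement_def]; group
      rw [this]
      exact mul_mem (Subgroup.subset_closure ⟨h, hh, 1, one_mem K, rfl⟩)
        (Subgroup.subset_closure ⟨h⁻¹, inv_mem hh, k⁻¹, inv_mem hk, rfl⟩)

lemma mem_sup_decomp {G : Type*} [Group G] {H L : Subgroup G}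
    (hnorm : ∀ h ∈ H, ∀ y ∈ L, h * y * h⁻¹ ∈ L) {x : G} (hx : x ∈ H ⊔ L) :
    ∃ h ∈ H, ∃ l ∈ L, x = h * l := by
  have hx' : x ∈ Subgroup.closure ((H : Set G) ∪ L) := by
    rwa [Subgroup.closure_union, Subgroup.closure_eq, Subgroup.closure_eq]
  clear hx
  induction hx' using Subgroup.closure_induction with
  | mem x hxm =>
      rcases hxm with hxm | hxm
      · exact ⟨x, hxm, 1, one_mem L, by group⟩
      · exact ⟨1, one_mem H, x, hxm, by group⟩
  | one => exact ⟨1, one_mem H, 1, one_mem L, by group⟩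
  | mul a b _ _ iha ihb =>
      obtain ⟨h1, hh1, l1, hl1, rfl⟩ := iha
      obtain ⟨h2, hh2, l2, hl2, rfl⟩ := ihb
      refine ⟨h1 * h2, mul_mem hh1 hh2, (h2⁻¹ * l1 * (h2⁻¹)⁻¹) * l2,
        mul_mem (hnorm _ (inv_mem hh2) _ hl1) hl2, by group⟩
  | inv a _ ih =>
      obtain ⟨h, hh, l, hl, rfl⟩ := ih
      exact ⟨h⁻¹, inv_mem hh, h * l⁻¹ * h⁻¹, hnorm _ hh _ (inv_mem hl), by group⟩

lemma key_step {G : Type*} [Group G] (g : G) (L : Subgroup G)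
    (hnorm : ∀ h ∈ Subgroup.zpowers g, ∀ y ∈ L, h * y * h⁻¹ ∈ L) :
    ⁅Subgroup.zpowers g, Subgroup.zpowers g ⊔ L⁆ = ⁅Subgroup.zpowers g, L⁆ := by
  apply le_antisymm
  · rw [Subgroup.commutator_le]
    intro a ha x hx
    obtain ⟨h, hh, l, hl, rfl⟩ := mem_sup_decomp hnorm hx
    obtain ⟨i, rfl⟩ := Subgroup.mem_zpowers_iff.mp ha
    obtain ⟨j, rfl⟩ := Subgroup.mem_zpowers_iff.mp hh
    have hc : g ^ i * g ^ j = g ^ j * g ^ i := by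
      rw [← zpow_add, ← zpow_add, add_comm]
    have : ⁅g ^ i, g ^ j * l⁆ = g ^ j * ⁅g ^ i, l⁆ * (g ^ j)⁻¹ := by
      simp only [commutatorElement_def]
      rw [← mul_assoc, hc]; group
    rw [this, Subgroup.commutator_comm]
    exact normalized_right L (Subgroup.zpowers g) hh
      (by rw [Subgroup.commutator_comm]; exact commutator_mem_commutator ha hl)
  · exact Subgroup.commutator_mono le_rfl le_sup_right

/-- Chan Van Hao's lemma: with `A 1 = ⟨g⟩^G`, `A (n+1) = ⟨g⟩^(A n)`,
`D 1 = [G,⟨g⟩]`, `D (n+1) = [D n, ⟨g⟩]`, we have `[⟨g⟩, A n] = D (n+1)` for `n ≥ 1`. -/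
theorem stmt3 {G : Type*} [Group G] (g : G) (A D : ℕ → Subgroup G)
    (hA1 : A 1 = nclIn (Subgroup.zpowers g) ⊤)
    (hA : ∀ n ≥ 1, A (n + 1) = nclIn (Subgroup.zpowers g) (A n))
    (hD1 : D 1 = ⁅(⊤ : Subgroup G), Subgroup.zpowers g⁆)
    (hD : ∀ n ≥ 1, D (n + 1) = ⁅D n, Subgroup.zpowers g⁆) :
    ∀ n ≥ 1, ⁅Subgroup.zpowers g, A n⁆ = D (n + 1) := by
  -- every D n, n ≥ 1, is normalized by zpowers g
  have hDnorm : ∀ n ≥ 1, ∀ h ∈ Subgroup.zpowers g, ∀ y ∈ D n,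
      h * y * h⁻¹ ∈ D n := by
    intro n hn
    rcases Nat.exists_eq_add_of_le hn with ⟨m, rfl⟩
    rcases m with _ | m
    · intro h hh y hy
      rw [hD1] at hy ⊢
      exact normalized_right _ _ hh hy
    · intro h hh y hy
      rw [show 1 + (m + 1) = (m + 1) + 1 by ring, hD (m + 1) (by omega)] at hy ⊢
      exact normalized_right _ _ hh hy
  intro n hn
  induction n with
  | zero => omega
  | succ m ih =>
    rcases Nat.eq_or_lt_of_le hn with h1 | h1
    · -- base case m + 1 = 1
      have hm : m = 0 := by omega
      subst hm
      rw [hA1, nclIn_eq, Subgroup.commutator_comm (Subgroup.zpowers g) ⊤, ← hD1,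
        key_step g (D 1) (hDnorm 1 le_rfl), Subgroup.commutator_comm, ← hD 1 le_rfl]
    · have hm : m ≥ 1 := by omega
      have ihm := ih hm
      rw [hA m hm, nclIn_eq, ihm, key_step g (D (m + 1)) (hDnorm (m + 1) (by omega)),
        Subgroup.commutator_comm, ← hD (m + 1) (by omega)]
end

section
/- Let G be a group, g ∈ G, and define A_n and D_n as follows: A_1 = ⟨g⟩^G, A_{n+1} = ⟨g⟩^{A_n}; D_1 = [G,⟨g⟩], D_{n+1} = [D_n,⟨g⟩]. Then for every k ≥ 1, every a ∈ A_k, and every integer m, the commutator [a, g^m] lies in D_{k+1}. -/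
open scoped commutatorElement

section aux

variable {G : Type*} [Group G]

/-- Powers of `g` normalize `⁅E, zpowers g⁆` if they normalize `E`. -/
lemma key1 (g : G) (E : Subgroup G)
    (hE : ∀ (m : ℤ) (x : G), x ∈ E → g ^ m * x * (g ^ m)⁻¹ ∈ E) :
    ∀ (m : ℤ) (x : G), x ∈ ⁅E, Subgroup.zpowers g⁆ →
      g ^ m * x * (g ^ m)⁻¹ ∈ ⁅E, Subgroup.zpowers g⁆ := by
  intro m x hx
  rw [Subgroup.commutator_def] at hx ⊢
  induction hx using Subgroup.closure_induction with
  | mem y hy =>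
    obtain ⟨a, ha, b, hb, rfl⟩ := hy
    have : g ^ m * ⁅a, b⁆ * (g ^ m)⁻¹ =
        ⁅g ^ m * a * (g ^ m)⁻¹, g ^ m * b * (g ^ m)⁻¹⁆ := by
      simp [commutatorElement_def]; group
    rw [this]
    apply Subgroup.subset_closure
    refine ⟨_, hE m a ha, _, ?_, rfl⟩
    obtain ⟨s, rfl⟩ := hb
    have : g ^ m * g ^ s * (g ^ m)⁻¹ = g ^ s := by group
    rw [this]; exact ⟨s, rfl⟩
  | one => simpa using Subgroup.one_mem _
  | mul a b _ _ ha hb =>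
    have : g ^ m * (a * b) * (g ^ m)⁻¹
        = (g ^ m * a * (g ^ m)⁻¹) * (g ^ m * b * (g ^ m)⁻¹) := by group
    rw [this]; exact Subgroup.mul_mem _ ha hb
  | inv a _ ha =>
    have : g ^ m * a⁻¹ * (g ^ m)⁻¹ = (g ^ m * a * (g ^ m)⁻¹)⁻¹ := by group
    rw [this]; exact Subgroup.inv_mem _ ha

/-- Decomposition lemma: elements of `nclIn (zpowers g) B` split as `g^t * d`
with `d ∈ ⁅E, zpowers g⁆`, provided elements of `B` split as `g^t * d` with `d ∈ E`. -/
lemma key2 (g : G) (B E : Subgroup G)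
    (hE : ∀ (m : ℤ) (x : G), x ∈ E → g ^ m * x * (g ^ m)⁻¹ ∈ E)
    (hdec : ∀ a ∈ B, ∃ t : ℤ, ∃ d ∈ E, a = g ^ t * d) :
    ∀ x ∈ nclIn (Subgroup.zpowers g) B,
      ∃ t : ℤ, ∃ d ∈ ⁅E, Subgroup.zpowers g⁆, x = g ^ t * d := by
  have hF := key1 g E hE
  intro x hx
  induction hx using Subgroup.closure_induction with
  | mem y hy =>
    obtain ⟨h, hh, k, hk, rfl⟩ := hy
    obtain ⟨s, rfl⟩ := hh
    obtain ⟨t, d, hd, rfl⟩ := hdec k hk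
    refine ⟨s, g ^ (-s) * ⁅d⁻¹, g ^ s⁆ * (g ^ (-s))⁻¹, ?_, ?_⟩
    · exact hF (-s) _ (Subgroup.commutator_mem_commutator (Subgroup.inv_mem _ hd)
        (Subgroup.mem_zpowers_iff.mpr ⟨s, rfl⟩))
    · simp only [commutatorElement_def]; group
  | one => exact ⟨0, 1, Subgroup.one_mem _, by group⟩
  | mul a b _ _ ha hb =>
    obtain ⟨t, d, hd, rfl⟩ := ha
    obtain ⟨s, e, he, rfl⟩ := hb
    refine ⟨t + s, (g ^ (-s) * d * (g ^ (-s))⁻¹) * e,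
      Subgroup.mul_mem _ (hF (-s) d hd) he, by group⟩
  | inv a _ ha =>
    obtain ⟨t, d, hd, rfl⟩ := ha
    refine ⟨-t, g ^ t * d⁻¹ * (g ^ t)⁻¹, hF t _ (Subgroup.inv_mem _ hd), by group⟩

end aux

/-- For `a ∈ A k` and `m ∈ ℤ`, the commutator `[a, g^m] = a⁻¹*(g^m)⁻¹*a*g^m` lies in `D (k+1)`. -/
theorem stmt5 {G : Type*} [Group G] (g : G) (A D : ℕ → Subgroup G)
    (hA1 : A 1 = nclIn (Subgroup.zpowers g) ⊤)
    (hA : ∀ n ≥ 1, A (n + 1) = nclIn (Subgroup.zpowers g) (A n))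
    (hD1 : D 1 = ⁅(⊤ : Subgroup G), Subgroup.zpowers g⁆)
    (hD : ∀ n ≥ 1, D (n + 1) = ⁅D n, Subgroup.zpowers g⁆) :
    ∀ k ≥ 1, ∀ a ∈ A k, ∀ m : ℤ,
      a⁻¹ * (g ^ m)⁻¹ * a * g ^ m ∈ D (k + 1) := by
  -- main induction: normalization of `D k` and decomposition of `A k`
  have main : ∀ k ≥ 1,
      (∀ (m : ℤ) (x : G), x ∈ D k → g ^ m * x * (g ^ m)⁻¹ ∈ D k) ∧
      (∀ a ∈ A k, ∃ t : ℤ, ∃ d ∈ D k, a = g ^ t * d) := by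
    intro k hk
    induction k with
    | zero => omega
    | succ n ih =>
      rcases Nat.eq_or_lt_of_le hk with h1 | h1
      · -- n + 1 = 1
        obtain rfl : n = 0 := by omega
        constructor
        · intro m x hx
          rw [hD1] at hx ⊢
          exact key1 g ⊤ (fun _ _ _ => Subgroup.mem_top _) m x hx
        · intro a ha
          rw [hA1] at ha
          rw [hD1]
          exact key2 g ⊤ ⊤ (fun _ _ _ => Subgroup.mem_top _)
            (fun a _ => ⟨0, a, Subgroup.mem_top _, by group⟩) a ha
      · have hn : n ≥ 1 := by omega
        obtain ⟨hN, hQ⟩ := ih hn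
        rw [hA n hn, hD n hn]
        exact ⟨fun m x hx => key1 g (D n) hN m x hx, key2 g (A n) (D n) hN hQ⟩
  intro k hk a ha m
  obtain ⟨t, d, hd, rfl⟩ := (main k hk).2 a ha
  rw [hD k hk]
  have : (g ^ t * d)⁻¹ * (g ^ m)⁻¹ * (g ^ t * d) * g ^ m = ⁅d⁻¹, (g ^ m)⁻¹⁆ := by
    simp only [commutatorElement_def]; group
  rw [this]
  exact Subgroup.commutator_mem_commutator (Subgroup.inv_mem _ hd) (Subgroup.inv_mem _ (Subgroup.mem_zpowers_iff.mpr ⟨m, rfl⟩))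
end

section
/- Let G be a group, g ∈ G, and k ≥ 1. Define A_0 = G, A_1 = ⟨g⟩^G, A_{n+1} = ⟨g⟩^{A_n}, and D_1 = [G,⟨g⟩], D_{n+1} = [D_n,⟨g⟩]. Suppose λ = (g^{n_1})^{h_1} · ... · (g^{n_r})^{h_r} where each n_i ∈ ℤ and each h_i ∈ A_{k-1}, and let l = n_1 + ... + n_r. Then g^{-l}·λ ∈ D_k. -/
open scoped commutatorElement

/-- Conjugation invariance passes to commutator subgroups. -/
lemma conjInv {G : Type*} [Group G] (c : G) (H K : Subgroup G)
    (hH : ∀ x ∈ H, c * x * c⁻¹ ∈ H) (hK : ∀ x ∈ K, c * x * c⁻¹ ∈ K) :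
    ∀ x ∈ ⁅H, K⁆, c * x * c⁻¹ ∈ ⁅H, K⁆ := by
  intro x hx
  rw [Subgroup.commutator_def] at hx
  induction hx using Subgroup.closure_induction with
  | mem y hy =>
    obtain ⟨p, hp, q, hq, rfl⟩ := hy
    have : c * ⁅p, q⁆ * c⁻¹ = ⁅c * p * c⁻¹, c * q * c⁻¹⁆ := by
      simp only [commutatorElement_def]; group
    rw [this]
    exact Subgroup.commutator_mem_commutator (hH p hp) (hK q hq)
  | one => simpa using one_mem _
  | mul y z _ _ hy hz =>
    have : c * (y * z) * c⁻¹ = (c * y * c⁻¹) * (c * z * c⁻¹) := by group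
    rw [this]; exact mul_mem hy hz
  | inv y _ hy =>
    have : c * y⁻¹ * c⁻¹ = (c * y * c⁻¹)⁻¹ := by group
    rw [this]; exact inv_mem hy

section Main

variable {G : Type*} [Group G] (g : G) (A D : ℕ → Subgroup G)

/-- each `D k` is invariant under conjugation by powers of `g`. -/
lemma Dinv
    (hA0 : A 0 = ⊤)
    (hD1 : D 1 = ⁅(⊤ : Subgroup G), Subgroup.zpowers g⁆)
    (hD : ∀ n ≥ 1, D (n + 1) = ⁅D n, Subgroup.zpowers g⁆) :
    ∀ k ≥ 1, ∀ m : ℤ, ∀ x ∈ D k, g ^ m * x * (g ^ m)⁻¹ ∈ D k := by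
  have hz : ∀ m : ℤ, ∀ x ∈ Subgroup.zpowers g, g ^ m * x * (g ^ m)⁻¹ ∈ Subgroup.zpowers g := by
    intro m x hx
    obtain ⟨j, rfl⟩ := Subgroup.mem_zpowers_iff.mp hx
    have : g ^ m * g ^ j * (g ^ m)⁻¹ = g ^ j := by group
    rw [this]; exact Subgroup.mem_zpowers_iff.mpr ⟨j, rfl⟩
  intro k hk
  induction k, hk using Nat.le_induction with
  | base =>
    intro m x hx
    rw [hD1] at hx ⊢
    exact conjInv (g ^ m) _ _ (fun y _ => Subgroup.mem_top _) (hz m) x hx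
  | succ k hk ih =>
    intro m x hx
    rw [hD k hk] at hx ⊢
    exact conjInv (g ^ m) _ _ (fun y hy => ih m y hy) (hz m) x hx

/-- Key lemma: commutators of powers of `g` with elements of `A (k-1)` lie in `D k`. -/
lemma keyLem
    (hA0 : A 0 = ⊤)
    (hA1 : A 1 = nclIn (Subgroup.zpowers g) ⊤)
    (hA : ∀ n ≥ 1, A (n + 1) = nclIn (Subgroup.zpowers g) (A n))
    (hD1 : D 1 = ⁅(⊤ : Subgroup G), Subgroup.zpowers g⁆)
    (hD : ∀ n ≥ 1, D (n + 1) = ⁅D n, Subgroup.zpowers g⁆) :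
    ∀ k ≥ 1, ∀ x ∈ A (k - 1), ∀ nn : ℤ,
      g ^ (-nn) * (x⁻¹ * g ^ nn * x) ∈ D k := by
  have hDinv := Dinv g A D hA0 hD1 hD
  intro k hk
  induction k, hk using Nat.le_induction with
  | base =>
    intro x hx nn
    have : g ^ (-nn) * (x⁻¹ * g ^ nn * x) = ⁅g ^ (-nn), x⁻¹⁆ := by
      rw [commutatorElement_def]; group
    rw [this, hD1, Subgroup.commutator_comm]
    exact Subgroup.commutator_mem_commutator (Subgroup.mem_zpowers_iff.mpr ⟨-nn, rfl⟩)
      (Subgroup.mem_top _)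
  | succ k hk ih =>
    -- first: every element of A k has the form g^m * d with d ∈ D k
    have hform : ∀ x ∈ A k, ∃ m : ℤ, ∃ d ∈ D k, x = g ^ m * d := by
      intro x hx
      have hAk : A k = nclIn (Subgroup.zpowers g) (A (k - 1)) := by
        rcases Nat.eq_or_lt_of_le hk with rfl | h1
        · simpa [hA0] using hA1
        · obtain ⟨j, rfl⟩ : ∃ j, k = j + 1 := ⟨k - 1, (Nat.succ_pred_eq_of_pos (by omega)).symm⟩
          simpa using hA j (by omega)
      rw [hAk] at hx
      unfold nclIn at hx
      induction hx using Subgroup.closure_induction with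
      | mem y hy =>
        obtain ⟨p, hp, a, ha, rfl⟩ := hy
        obtain ⟨m, rfl⟩ := Subgroup.mem_zpowers_iff.mp hp
        refine ⟨m, g ^ (-m) * (a⁻¹ * g ^ m * a), ih a ha m, ?_⟩
        group
      | one => exact ⟨0, 1, one_mem _, by group⟩
      | mul y z _ _ hy hz =>
        obtain ⟨m₁, d₁, hd₁, rfl⟩ := hy
        obtain ⟨m₂, d₂, hd₂, rfl⟩ := hz
        refine ⟨m₁ + m₂, (g ^ (-m₂) * d₁ * (g ^ (-m₂))⁻¹) * d₂,
          mul_mem (hDinv k hk (-m₂) d₁ hd₁) hd₂, ?_⟩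
        group
      | inv y _ hy =>
        obtain ⟨m, d, hd, rfl⟩ := hy
        refine ⟨-m, g ^ m * d⁻¹ * (g ^ m)⁻¹, hDinv k hk m d⁻¹ (inv_mem hd), ?_⟩
        group
    intro x hx nn
    simp only [Nat.add_sub_cancel] at hx
    obtain ⟨m, d, hd, rfl⟩ := hform x hx
    have heq : g ^ (-nn) * ((g ^ m * d)⁻¹ * g ^ nn * (g ^ m * d)) = ⁅g ^ (-nn), d⁻¹⁆ := by
      rw [commutatorElement_def]; group
    rw [heq, hD k hk, Subgroup.commutator_comm]
    exact Subgroup.commutator_mem_commutator (Subgroup.mem_zpowers_iff.mpr ⟨-nn, rfl⟩)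
      (inv_mem hd)

end Main

/-- Proposition 3.1(b), group-theoretic content: if `λ` is a product of conjugates
`(g^{n_i})^{h_i}` with `h_i ∈ A (k-1)`, and `l = ∑ n_i`, then `g^{-l} * λ ∈ D k`. -/
theorem stmt7 {G : Type*} [Group G] (g : G) (k : ℕ) (hk : k ≥ 1)
    (A D : ℕ → Subgroup G)
    (hA0 : A 0 = ⊤)
    (hA1 : A 1 = nclIn (Subgroup.zpowers g) ⊤)
    (hA : ∀ n ≥ 1, A (n + 1) = nclIn (Subgroup.zpowers g) (A n))
    (hD1 : D 1 = ⁅(⊤ : Subgroup G), Subgroup.zpowers g⁆)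
    (hD : ∀ n ≥ 1, D (n + 1) = ⁅D n, Subgroup.zpowers g⁆)
    (r : ℕ) (n : ℕ → ℤ) (h : ℕ → G) (hh : ∀ i < r, h i ∈ A (k - 1))
    (lam : G) (hlam : lam = ((List.range r).map (fun i => (h i)⁻¹ * g ^ (n i) * h i)).prod) :
    g ^ (-(∑ i ∈ Finset.range r, n i)) * lam ∈ D k := by
  subst hlam
  have hDinv := Dinv g A D hA0 hD1 hD
  have hkey := keyLem g A D hA0 hA1 hA hD1 hD
  induction r with
  | zero => simpa using one_mem _
  | succ r ih =>
    rw [List.range_succ, List.map_append, List.prod_append, Finset.sum_range_succ]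
    simp only [List.map_cons, List.map_nil, List.prod_cons, List.prod_nil, mul_one]
    set s := ∑ i ∈ Finset.range r, n i
    set L := ((List.range r).map (fun i => (h i)⁻¹ * g ^ (n i) * h i)).prod
    have h1 : g ^ (-s) * L ∈ D k := ih (fun i hi => hh i (by omega))
    have h2 : g ^ (-(n r)) * ((h r)⁻¹ * g ^ (n r) * h r) ∈ D k :=
      hkey k hk (h r) (hh r (by omega)) (n r)
    have heq : g ^ (-(s + n r)) * (L * ((h r)⁻¹ * g ^ (n r) * h r)) =
        (g ^ (-(n r)) * (g ^ (-s) * L) * (g ^ (-(n r)))⁻¹) *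
          (g ^ (-(n r)) * ((h r)⁻¹ * g ^ (n r) * h r)) := by group
    rw [heq]
    exact mul_mem (hDinv k hk (-(n r)) _ h1) h2
end

section
/- Let G be a group, g ∈ G, and define A_1 = ⟨g⟩^G, A_{n+1} = ⟨g⟩^{A_n}, and D_1 = [G,⟨g⟩], D_{n+1} = [D_n,⟨g⟩]. Then for every n ≥ 1, every element of A_n can be written as a product x·y with x ∈ ⟨g⟩ and y ∈ D_n; in particular A_n is contained in the join ⟨g⟩ ⊔ D_n. -/
open scoped commutatorElement

/-- Every element of `A n` is a product of an element of `⟨g⟩` and an element of `D n`;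
in particular `A n ≤ ⟨g⟩ ⊔ D n`. -/
theorem stmt8 {G : Type*} [Group G] (g : G) (A D : ℕ → Subgroup G)
    (hA1 : A 1 = nclIn (Subgroup.zpowers g) ⊤)
    (hA : ∀ n ≥ 1, A (n + 1) = nclIn (Subgroup.zpowers g) (A n))
    (hD1 : D 1 = ⁅(⊤ : Subgroup G), Subgroup.zpowers g⁆)
    (hD : ∀ n ≥ 1, D (n + 1) = ⁅D n, Subgroup.zpowers g⁆) :
    ∀ n ≥ 1, (∀ a ∈ A n, ∃ x ∈ Subgroup.zpowers g, ∃ y ∈ D n, a = x * y) ∧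
      A n ≤ Subgroup.zpowers g ⊔ D n := by
  set Z := Subgroup.zpowers g with hZ
  -- the commutator of `D n` with `Z` is contained in `D n`
  have hle : ∀ n, 1 ≤ n → ⁅D n, Z⁆ ≤ D n := by
    intro n hn
    induction n with
    | zero => omega
    | succ m ih =>
      rcases Nat.lt_or_ge 1 (m + 1) with h1 | h1
      · have hm : 1 ≤ m := by omega
        rw [hD m hm]
        exact Subgroup.commutator_mono (ih hm) le_rfl
      · have : m + 1 = 1 := by omega
        rw [this, hD1]
        exact Subgroup.commutator_mono le_top le_rfl
  -- `Z` normalizes `D n`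
  have hconj : ∀ n, 1 ≤ n → ∀ x ∈ Z, ∀ y ∈ D n, x⁻¹ * y * x ∈ D n := by
    intro n hn x hx y hy
    have hc : ⁅y⁻¹, x⁻¹⁆ ∈ D n :=
      hle n hn (Subgroup.commutator_mem_commutator (inv_mem hy) (inv_mem hx))
    have := (D n).mul_mem hy hc
    have heq : y * ⁅y⁻¹, x⁻¹⁆ = x⁻¹ * y * x := by
      simp only [commutatorElement_def]; group
    rwa [heq] at this
  -- closure of a decomposable set is decomposable
  have clos : ∀ n, 1 ≤ n → ∀ s : Set G,
      (∀ a ∈ s, ∃ x ∈ Z, ∃ y ∈ D n, a = x * y) →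
      ∀ a ∈ Subgroup.closure s, ∃ x ∈ Z, ∃ y ∈ D n, a = x * y := by
    intro n hn s hs a ha
    induction ha using Subgroup.closure_induction with
    | mem a ha => exact hs a ha
    | one => exact ⟨1, one_mem _, 1, one_mem _, by simp⟩
    | mul a b _ _ iha ihb =>
      obtain ⟨x1, hx1, y1, hy1, rfl⟩ := iha
      obtain ⟨x2, hx2, y2, hy2, rfl⟩ := ihb
      refine ⟨x1 * x2, mul_mem hx1 hx2, (x2⁻¹ * y1 * x2) * y2,
        mul_mem (hconj n hn x2 hx2 y1 hy1) hy2, by group⟩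
    | inv a _ iha =>
      obtain ⟨x, hx, y, hy, rfl⟩ := iha
      refine ⟨x⁻¹, inv_mem hx, (x⁻¹)⁻¹ * y⁻¹ * x⁻¹,
        hconj n hn x⁻¹ (inv_mem hx) y⁻¹ (inv_mem hy), by group⟩
  -- main decomposition
  have main : ∀ n, 1 ≤ n → ∀ a ∈ A n, ∃ x ∈ Z, ∃ y ∈ D n, a = x * y := by
    intro n hn
    induction n with
    | zero => omega
    | succ m ih =>
      rcases Nat.lt_or_ge 1 (m + 1) with h1 | h1
      · -- inductive case: m ≥ 1
        have hm : 1 ≤ m := by omega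
        rw [hA m hm, nclIn]
        apply clos (m + 1) (by omega)
        rintro a ⟨h, hh, k, hk, rfl⟩
        obtain ⟨x, hx, y, hy, rfl⟩ := ih hm k hk
        -- h commutes with x
        obtain ⟨i, hi⟩ := id hx
        obtain ⟨j, hj⟩ := id hh
        have hcomm : h * x = x * h := by
          rw [← hi, ← hj]; exact (Commute.zpow_zpow_self g j i).eq
        refine ⟨h, hh, ⁅h⁻¹, y⁻¹⁆, ?_, ?_⟩
        · rw [hD m hm, Subgroup.commutator_comm]
          exact Subgroup.commutator_mem_commutator (inv_mem hh) (inv_mem hy)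
        · simp only [commutatorElement_def]
          rw [mul_inv_rev]
          calc y⁻¹ * x⁻¹ * h * (x * y) = y⁻¹ * x⁻¹ * (h * x) * y := by group
            _ = y⁻¹ * x⁻¹ * (x * h) * y := by rw [hcomm]
            _ = h * (h⁻¹ * y⁻¹ * h⁻¹⁻¹ * y⁻¹⁻¹) := by group
      · -- base case: m + 1 = 1
        have : m + 1 = 1 := by omega
        rw [this, hA1, nclIn]
        apply clos 1 le_rfl
        rintro a ⟨h, hh, k, -, rfl⟩
        refine ⟨h, hh, ⁅h⁻¹, k⁻¹⁆, ?_, ?_⟩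
        · rw [hD1, Subgroup.commutator_comm]
          exact Subgroup.commutator_mem_commutator (inv_mem hh) (inv_mem (Subgroup.mem_top k))
        · simp only [commutatorElement_def]; group
  intro n hn
  refine ⟨main n hn, fun a ha => ?_⟩
  obtain ⟨x, hx, y, hy, rfl⟩ := main n hn a ha
  exact mul_mem (Subgroup.mem_sup_left hx) (Subgroup.mem_sup_right hy)
end

section
/- Let G be a group, m ∈ G, and k ≥ 0. Define A_0 = G, A_1 = ⟨m⟩^G, A_{n+1} = ⟨m⟩^{A_n}. Then for every x ∈ A_k, the commutator [m, x⁻¹mx] lies in γ_{k+3}(G), the (k+3)-rd term of the lower central series of G. -/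
open scoped commutatorElement


lemma mem_lcs_succ {G : Type*} [Group G] {n : ℕ} {a : G}
    (ha : a ∈ (⊤ : Subgroup G).lowerCentralSeries n) (b : G) : ⁅a, b⁆ ∈ (⊤ : Subgroup G).lowerCentralSeries (n + 1) := by
  have h : (⊤ : Subgroup G).lowerCentralSeries (n + 1) = ⁅(⊤ : Subgroup G).lowerCentralSeries n, (⊤ : Subgroup G)⁆ := rfl
  rw [h]
  exact Subgroup.commutator_mem_commutator ha (Subgroup.mem_top b)

lemma key_lemma {G : Type*} [Group G] (m : G) (A : ℕ → Subgroup G)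
    (hA : ∀ n, A (n + 1) = nclIn (Subgroup.zpowers m) (A n)) :
    ∀ k : ℕ, ∀ x ∈ A k, ∀ j : ℤ,
      (m ^ j)⁻¹ * x⁻¹ * m ^ j * x ∈ (⊤ : Subgroup G).lowerCentralSeries (k + 1) := by
  intro k
  induction k with
  | zero =>
      intro x hx j
      have heq : (m ^ j)⁻¹ * x⁻¹ * m ^ j * x = ⁅(m ^ j)⁻¹, x⁻¹⁆ := by
        simp only [commutatorElement_def]; group
      rw [heq]
      exact mem_lcs_succ (Subgroup.mem_top _) x⁻¹
  | succ k ih =>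
      intro x hx j
      rw [hA k] at hx
      unfold nclIn at hx
      refine Subgroup.closure_induction
        (p := fun g _ => (m ^ j)⁻¹ * g⁻¹ * m ^ j * g ∈ (⊤ : Subgroup G).lowerCentralSeries (k + 1 + 1))
        ?_ ?_ ?_ ?_ hx
      · rintro s ⟨h, ⟨j0, rfl⟩, a, ha, rfl⟩
        have hc := ih a ha (-j0)
        have hd := mem_lcs_succ hc (m ^ j)⁻¹
        have heq : (m ^ j)⁻¹ * (a⁻¹ * m ^ j0 * a)⁻¹ * m ^ j * (a⁻¹ * m ^ j0 * a)
            = (m ^ j0)⁻¹ * (⁅(m ^ (-j0 : ℤ))⁻¹ * a⁻¹ * m ^ (-j0 : ℤ) * a, (m ^ j)⁻¹⁆)⁻¹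
              * m ^ j0 := by
          simp only [commutatorElement_def]
          group
        rw [heq]
        have := (Subgroup.lowerCentralSeries_normal ⊤ (k + 1 + 1)).conj_mem _ (inv_mem hd) (m ^ j0)⁻¹
        simpa using this
      · beta_reduce
        have heq : (m ^ j)⁻¹ * (1 : G)⁻¹ * m ^ j * 1 = 1 := by group
        rw [heq]; exact one_mem _
      · intro x y hxc hyc px py
        beta_reduce at px py ⊢
        have heq : (m ^ j)⁻¹ * (x * y)⁻¹ * m ^ j * (x * y)
            = ((m ^ j)⁻¹ * y⁻¹ * m ^ j * y)
              * (y⁻¹ * ((m ^ j)⁻¹ * x⁻¹ * m ^ j * x) * y) := by group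
        rw [heq]
        refine mul_mem py ?_
        have := (Subgroup.lowerCentralSeries_normal ⊤ (k + 1 + 1)).conj_mem _ px y⁻¹
        simpa using this
      · intro x hxc px
        beta_reduce at px ⊢
        have heq : (m ^ j)⁻¹ * x⁻¹⁻¹ * m ^ j * x⁻¹
            = x * ((m ^ j)⁻¹ * x⁻¹ * m ^ j * x)⁻¹ * x⁻¹ := by group
        rw [heq]
        exact (Subgroup.lowerCentralSeries_normal ⊤ (k + 1 + 1)).conj_mem _ (inv_mem px) x

/-- For `x ∈ A k`, the commutator `[m, x⁻¹mx] = m⁻¹*(x⁻¹mx)⁻¹*m*(x⁻¹mx)` lies in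
`γ_{k+3}(G)`, which is `(⊤ : Subgroup G).lowerCentralSeries (k+2)` since `(⊤ : Subgroup G).lowerCentralSeries 0 = γ₁(G)`. -/
theorem stmt10 {G : Type*} [Group G] (m : G) (A : ℕ → Subgroup G)
    (hA0 : A 0 = ⊤)
    (hA1 : A 1 = nclIn (Subgroup.zpowers m) ⊤)
    (hA : ∀ n ≥ 1, A (n + 1) = nclIn (Subgroup.zpowers m) (A n)) :
    ∀ k : ℕ, ∀ x ∈ A k,
      m⁻¹ * (x⁻¹ * m * x)⁻¹ * m * (x⁻¹ * m * x) ∈ (⊤ : Subgroup G).lowerCentralSeries (k + 2) := by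
  have hA' : ∀ n, A (n + 1) = nclIn (Subgroup.zpowers m) (A n) := by
    intro n
    cases n with
    | zero => rw [hA1, hA0]
    | succ n => exact hA (n + 1) (Nat.le_add_left 1 n)
  intro k x hx
  have hc : m⁻¹ * x⁻¹ * m * x ∈ (⊤ : Subgroup G).lowerCentralSeries (k + 1) := by
    simpa using key_lemma m A hA' k x hx 1
  have heq : m⁻¹ * (x⁻¹ * m * x)⁻¹ * m * (x⁻¹ * m * x)
      = (⁅(m⁻¹ * x⁻¹ * m * x)⁻¹, m⁻¹⁆)⁻¹ := by
    simp only [commutatorElement_def]; group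
  rw [heq]
  exact inv_mem (mem_lcs_succ (inv_mem hc) m⁻¹)
end
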